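/- Let $\xi$ be a complex-valued random variable with mean zero, unit variance, independent real and imaginary parts, and finite fourth moment. With $\tilde{\xi}$ defined by truncating the real and imaginary parts of $\xi$ at level $L/\sqrt{2}$ and recentering, if $L \ge \sqrt{8\,\mathbb{E}|\xi|^4}$, then $\mathrm{Var}(\tilde{\xi}) \ge 1/2$. -/

import Mathlib

open MeasureTheory ProbabilityTheory

/-- Truncation of a real number at level `L / √2`. -/
noncomputable def truncAt (L : ℝ) (x : ℝ) : ℝ := if |x| ≤ L / Real.sqrt 2 then x else 0

/-- The truncated and recentered random variable `ξ̃` obtained from a complex random variable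
`ξ` by truncating its real and imaginary parts at level `L / √2` and recentering. -/
noncomputable def truncXi {Ω : Type*} [MeasurableSpace Ω] (P : MeasureTheory.Measure Ω)
    (L : ℝ) (ξ : Ω → ℂ) (ω : Ω) : ℂ :=
  ((truncAt L (ξ ω).re - ∫ ω', truncAt L (ξ ω').re ∂P : ℝ) : ℂ) +
    Complex.I * ((truncAt L (ξ ω).im - ∫ ω', truncAt L (ξ ω').im ∂P : ℝ) : ℂ)

/-- Key one-dimensional estimate: for a centered real random variable `W` with
integrable square and fourth power, the variance of the truncation of `W` at a
positive level `a` is at least `∫ W² - 2 ∫ W⁴ / a²`. -/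
lemma trunc_component_bound {Ω : Type*} [MeasurableSpace Ω] (P : Measure Ω)
    [IsProbabilityMeasure P] (W : Ω → ℝ) (hW : AEMeasurable W P)
    (a : ℝ) (ha : 0 < a)
    (h2 : Integrable (fun ω => W ω ^ 2) P) (h4 : Integrable (fun ω => W ω ^ 4) P)
    (hmean : ∫ ω, W ω ∂P = 0) :
    ∫ ω, W ω ^ 2 ∂P - 2 * (∫ ω, W ω ^ 4 ∂P) / a ^ 2 ≤
      ∫ ω, ((if |W ω| ≤ a then W ω else 0) - ∫ ω', (if |W ω'| ≤ a then W ω' else 0) ∂P) ^ 2 ∂P := by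
  set T : Ω → ℝ := fun ω => if |W ω| ≤ a then W ω else 0 with hTdef
  set U : Ω → ℝ := fun ω => if |W ω| ≤ a then 0 else W ω with hUdef
  have htrunc_meas : Measurable fun x : ℝ => if |x| ≤ a then x else 0 :=
    Measurable.ite (measurableSet_le (continuous_abs.measurable) measurable_const)
      measurable_id measurable_const
  have htail_meas : Measurable fun x : ℝ => if |x| ≤ a then 0 else x :=
    Measurable.ite (measurableSet_le (continuous_abs.measurable) measurable_const)
      measurable_const measurable_id
  have hTmeas : AEMeasurable T P := htrunc_meas.comp_aemeasurable hW
  have hUmeas : AEMeasurable U P := htail_meas.comp_aemeasurable hW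
  -- basic integrabilities
  have hWint : Integrable W P := by
    refine (h2.add (integrable_const 1)).mono hW.aestronglyMeasurable ?_
    filter_upwards with ω
    have : |W ω| ≤ W ω ^ 2 + 1 := by nlinarith [abs_nonneg (W ω), sq_abs (W ω)]
    simpa [Real.norm_eq_abs, abs_of_nonneg (by positivity : (0:ℝ) ≤ W ω ^ 2 + 1)] using this
  have hTint : Integrable T P := by
    refine hWint.mono hTmeas.aestronglyMeasurable ?_
    filter_upwards with ω
    simp only [hTdef, Real.norm_eq_abs]
    split <;> simp [abs_nonneg]
  have hUint : Integrable U P := by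
    refine hWint.mono hUmeas.aestronglyMeasurable ?_
    filter_upwards with ω
    simp only [hUdef, Real.norm_eq_abs]
    split <;> simp [abs_nonneg]
  have hT2int : Integrable (fun ω => T ω ^ 2) P := by
    refine h2.mono (hTmeas.pow_const 2).aestronglyMeasurable ?_
    filter_upwards with ω
    simp only [hTdef, Real.norm_eq_abs, abs_pow]
    exact pow_le_pow_left₀ (abs_nonneg _) (by split <;> simp [abs_nonneg]) 2
  have hU2int : Integrable (fun ω => U ω ^ 2) P := by
    refine h2.mono (hUmeas.pow_const 2).aestronglyMeasurable ?_
    filter_upwards with ω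
    simp only [hUdef, Real.norm_eq_abs, abs_pow]
    exact pow_le_pow_left₀ (abs_nonneg _) (by split <;> simp [abs_nonneg]) 2
  -- W = T + U pointwise, T² + U² = W²
  have hsum : ∀ ω, T ω + U ω = W ω := by
    intro ω; simp only [hTdef, hUdef]; split <;> ring
  have hsq : ∀ ω, T ω ^ 2 + U ω ^ 2 = W ω ^ 2 := by
    intro ω; simp only [hTdef, hUdef]; split <;> ring
  -- mean of T is -(mean of U)
  have hTU : (∫ ω, T ω ∂P) + (∫ ω, U ω ∂P) = 0 := by
    rw [← integral_add hTint hUint]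
    simp only [hsum, hmean]
  -- ∫ T² = ∫ W² - ∫ U²
  have hT2 : (∫ ω, T ω ^ 2 ∂P) = (∫ ω, W ω ^ 2 ∂P) - ∫ ω, U ω ^ 2 ∂P := by
    have : (∫ ω, T ω ^ 2 ∂P) + (∫ ω, U ω ^ 2 ∂P) = ∫ ω, W ω ^ 2 ∂P := by
      rw [← integral_add hT2int hU2int]; simp only [hsq]
    linarith
  -- ∫ U² ≤ ∫ W⁴ / a²
  have hU2le : (∫ ω, U ω ^ 2 ∂P) ≤ (∫ ω, W ω ^ 4 ∂P) / a ^ 2 := by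
    have h := integral_mono hU2int (h4.div_const (a ^ 2)) (fun ω => ?_)
    · rwa [integral_div] at h
    · by_cases hc : |W ω| ≤ a
      · have h0 : (0:ℝ) ≤ W ω ^ 4 / a ^ 2 := by positivity
        simpa [hUdef, if_pos hc] using h0
      · simp only [hUdef, if_neg hc]
        have h1 : a < |W ω| := lt_of_not_ge hc
        have h2 : a ^ 2 < W ω ^ 2 := by nlinarith [abs_nonneg (W ω), sq_abs (W ω)]
        rw [le_div_iff₀ (by positivity)]
        nlinarith [sq_nonneg (W ω)]
  -- (∫ U)² ≤ ∫ U²  (via nonnegativity of variance)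
  have hUmem : MemLp U 2 P := (memLp_two_iff_integrable_sq hUmeas.aestronglyMeasurable).2 hU2int
  have hCS : (∫ ω, U ω ∂P) ^ 2 ≤ ∫ ω, U ω ^ 2 ∂P := by
    have h := variance_nonneg U P
    rw [variance_eq_sub hUmem] at h
    have : P[U ^ 2] = ∫ ω, U ω ^ 2 ∂P := by rfl
    simp only [this] at h
    linarith
  set m : ℝ := ∫ ω, T ω ∂P with hm
  have hm2 : m ^ 2 ≤ ∫ ω, U ω ^ 2 ∂P := by
    have : m = -(∫ ω, U ω ∂P) := by linarith
    rw [this]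
    simpa using hCS
  -- expand the variance integral
  have hexp : (∫ ω, (T ω - m) ^ 2 ∂P) = (∫ ω, T ω ^ 2 ∂P) - m ^ 2 := by
    have h1 : (fun ω => (T ω - m) ^ 2) = fun ω => (T ω ^ 2 - (2 * m) * T ω) + m ^ 2 := by
      funext ω; ring
    have hI1 : Integrable (fun ω => T ω ^ 2 - (2 * m) * T ω) P :=
      hT2int.sub (hTint.const_mul (2 * m))
    rw [h1, integral_add hI1 (integrable_const _),
      integral_sub hT2int (hTint.const_mul (2 * m)), integral_const_mul, integral_const]
    simp only [← hm, probReal_univ, measure_univ, ENNReal.toReal_one, smul_eq_mul, one_mul]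
    ring
  calc ∫ ω, W ω ^ 2 ∂P - 2 * (∫ ω, W ω ^ 4 ∂P) / a ^ 2
      ≤ (∫ ω, T ω ^ 2 ∂P) - m ^ 2 := by
        rw [hT2]
        have : 2 * (∫ ω, W ω ^ 4 ∂P) / a ^ 2 = 2 * ((∫ ω, W ω ^ 4 ∂P) / a ^ 2) := by ring
        linarith
    _ = ∫ ω, (T ω - m) ^ 2 ∂P := hexp.symm

set_option maxHeartbeats 1000000 in
theorem truncation_variance_ge_half
    {Ω : Type*} [MeasurableSpace Ω] (P : Measure Ω) [IsProbabilityMeasure P]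
    (ξ : Ω → ℂ) (hmeas : AEMeasurable ξ P)
    (hmean : ∫ ω, ξ ω ∂P = 0)
    (hvar : ∫ ω, ‖ξ ω‖ ^ 2 ∂P = 1)
    (hindep : IndepFun (fun ω => (ξ ω).re) (fun ω => (ξ ω).im) P)
    (h4 : Integrable (fun ω => ‖ξ ω‖ ^ 4) P)
    (L : ℝ) (hL : Real.sqrt (8 * ∫ ω, ‖ξ ω‖ ^ 4 ∂P) ≤ L) :
    (1 : ℝ) / 2 ≤ ∫ ω, ‖truncXi P L ξ ω‖ ^ 2 ∂P := by
  set f : Ω → ℝ := fun ω => (ξ ω).re with hfdef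
  set g : Ω → ℝ := fun ω => (ξ ω).im with hgdef
  set M : ℝ := ∫ ω, ‖ξ ω‖ ^ 4 ∂P with hMdef
  have hfm : AEMeasurable f P := (Complex.measurable_re).comp_aemeasurable hmeas
  have hgm : AEMeasurable g P := (Complex.measurable_im).comp_aemeasurable hmeas
  have habs : ∀ ω, ‖ξ ω‖ ^ 2 = f ω ^ 2 + g ω ^ 2 := fun ω => by
    rw [Complex.sq_norm, Complex.normSq_apply]; ring
  have habs4 : ∀ ω, ‖ξ ω‖ ^ 4 = (f ω ^ 2 + g ω ^ 2) ^ 2 := fun ω => by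
    rw [show (4 : ℕ) = 2 * 2 by norm_num, pow_mul, habs]
  have habsm : AEMeasurable (fun ω => ‖ξ ω‖) P := by
    simpa using hmeas.norm
  -- integrability of |ξ|²
  have h2 : Integrable (fun ω => ‖ξ ω‖ ^ 2) P := by
    refine (h4.add (integrable_const 1)).mono
      ((habsm.pow_const 2).aestronglyMeasurable) ?_
    filter_upwards with ω
    have h0 : (0:ℝ) ≤ ‖ξ ω‖ := norm_nonneg _
    have : ‖ξ ω‖ ^ 2 ≤ ‖ξ ω‖ ^ 4 + 1 := by
      nlinarith [sq_nonneg (‖ξ ω‖ ^ 2 - 1), sq_nonneg (‖ξ ω‖)]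
    simpa [Real.norm_eq_abs, abs_of_nonneg (by positivity : (0:ℝ) ≤ ‖ξ ω‖ ^ 4 + 1),
      abs_of_nonneg (by positivity : (0:ℝ) ≤ ‖ξ ω‖ ^ 2)] using this
  -- M ≥ 1
  have hM1 : 1 ≤ M := by
    have key : ∀ ω, ‖ξ ω‖ ^ 2 ≤ (1 + ‖ξ ω‖ ^ 4) / 2 := by
      intro ω
      have h0 : (0:ℝ) ≤ ‖ξ ω‖ := norm_nonneg _
      nlinarith [sq_nonneg (‖ξ ω‖ ^ 2 - 1)]
    have hIc : Integrable (fun ω => 1 + ‖ξ ω‖ ^ 4) P := (integrable_const 1).add h4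
    have hmono := integral_mono h2 (hIc.div_const 2) key
    rw [hvar, integral_div] at hmono
    have h5 : ∫ ω, (1 + ‖ξ ω‖ ^ 4) ∂P = 1 + M := by
      rw [integral_add (integrable_const 1) h4, integral_const]
      simp [hMdef]
    rw [h5] at hmono
    linarith
  have hM0 : (0:ℝ) < M := by linarith
  -- a := L / √2 and a² ≥ 4M
  set a : ℝ := L / Real.sqrt 2 with hadef
  have hL2 : 8 * M ≤ L ^ 2 := by
    have h8M : (0:ℝ) ≤ 8 * M := by linarith
    have hLpos : 0 ≤ L := le_trans (Real.sqrt_nonneg _) hL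
    nlinarith [Real.sq_sqrt h8M, Real.sqrt_nonneg (8 * M)]
  have ha2 : 4 * M ≤ a ^ 2 := by
    rw [hadef, div_pow, Real.sq_sqrt (by norm_num : (0:ℝ) ≤ 2)]
    linarith
  have ha : 0 < a := by
    have hLpos : 0 < L :=
      lt_of_lt_of_le (Real.sqrt_pos.mpr (by linarith : (0:ℝ) < 8 * M)) hL
    exact div_pos hLpos (Real.sqrt_pos.mpr (by norm_num))
  -- integrability of components
  have hf2 : Integrable (fun ω => f ω ^ 2) P := by
    refine h2.mono ((hfm.pow_const 2).aestronglyMeasurable) ?_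
    filter_upwards with ω
    rw [Real.norm_eq_abs, abs_of_nonneg (sq_nonneg _), Real.norm_eq_abs,
      abs_of_nonneg (by positivity), habs]
    nlinarith [sq_nonneg (g ω)]
  have hg2 : Integrable (fun ω => g ω ^ 2) P := by
    refine h2.mono ((hgm.pow_const 2).aestronglyMeasurable) ?_
    filter_upwards with ω
    rw [Real.norm_eq_abs, abs_of_nonneg (sq_nonneg _), Real.norm_eq_abs,
      abs_of_nonneg (by positivity), habs]
    nlinarith [sq_nonneg (f ω)]
  have hf4 : Integrable (fun ω => f ω ^ 4) P := by
    refine h4.mono ((hfm.pow_const 4).aestronglyMeasurable) ?_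
    filter_upwards with ω
    rw [Real.norm_eq_abs, abs_of_nonneg (by positivity), Real.norm_eq_abs,
      abs_of_nonneg (by positivity), habs4]
    nlinarith [sq_nonneg (g ω), sq_nonneg (f ω), sq_nonneg (f ω * g ω)]
  have hg4 : Integrable (fun ω => g ω ^ 4) P := by
    refine h4.mono ((hgm.pow_const 4).aestronglyMeasurable) ?_
    filter_upwards with ω
    rw [Real.norm_eq_abs, abs_of_nonneg (by positivity), Real.norm_eq_abs,
      abs_of_nonneg (by positivity), habs4]
    nlinarith [sq_nonneg (g ω), sq_nonneg (f ω), sq_nonneg (f ω * g ω)]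
  -- ξ is integrable, so means of f and g vanish
  have hξint : Integrable ξ P := by
    refine (h2.add (integrable_const 1)).mono hmeas.aestronglyMeasurable ?_
    filter_upwards with ω
    have h0 : (0:ℝ) ≤ ‖ξ ω‖ := norm_nonneg _
    have : ‖ξ ω‖ ≤ ‖ξ ω‖ ^ 2 + 1 := by nlinarith
    simpa [Real.norm_eq_abs,
      abs_of_nonneg (by positivity : (0:ℝ) ≤ ‖ξ ω‖ ^ 2 + 1)] using this
  have hfmean : ∫ ω, f ω ∂P = 0 := by
    have := integral_re (𝕜 := ℂ) hξint
    simpa [hmean] using this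
  have hgmean : ∫ ω, g ω ∂P = 0 := by
    have := integral_im (𝕜 := ℂ) hξint
    simpa [hmean] using this
  -- apply the component bound
  have hcompf := trunc_component_bound P f hfm a ha hf2 hf4 hfmean
  have hcompg := trunc_component_bound P g hgm a ha hg2 hg4 hgmean
  -- the truncated-at-L pieces are exactly truncAt L
  have htf : ∀ x : ℝ, truncAt L x = if |x| ≤ a then x else 0 := fun x => rfl
  -- rewrite |truncXi|²
  set mf : ℝ := ∫ ω', truncAt L (ξ ω').re ∂P with hmf
  set mg : ℝ := ∫ ω', truncAt L (ξ ω').im ∂P with hmg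
  have hXi : ∀ ω, ‖truncXi P L ξ ω‖ ^ 2 =
      (truncAt L (f ω) - mf) ^ 2 + (truncAt L (g ω) - mg) ^ 2 := by
    intro ω
    rw [truncXi, Complex.sq_norm, Complex.normSq_apply]
    simp [hfdef, hgdef]
    ring
  -- integrability of the two summands
  have htrunc_meas : Measurable (truncAt L) := by
    unfold truncAt
    exact Measurable.ite (measurableSet_le (continuous_abs.measurable) measurable_const)
      measurable_id measurable_const
  have hIf : Integrable (fun ω => (truncAt L (f ω) - mf) ^ 2) P := by
    have hbound : Integrable (fun ω => 2 * f ω ^ 2 + 2 * mf ^ 2) P :=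
      (hf2.const_mul 2).add (integrable_const (2 * mf ^ 2))
    refine hbound.mono
      ((((htrunc_meas.comp_aemeasurable hfm).sub aemeasurable_const).pow_const 2).aestronglyMeasurable) ?_
    filter_upwards with ω
    have hT : truncAt L (f ω) ^ 2 ≤ f ω ^ 2 := by
      rw [htf]; split
      · exact le_rfl
      · nlinarith [sq_nonneg (f ω)]
    have h0 : (0:ℝ) ≤ 2 * f ω ^ 2 + 2 * mf ^ 2 := by positivity
    rw [Real.norm_eq_abs, abs_of_nonneg (sq_nonneg _), Real.norm_eq_abs, abs_of_nonneg h0]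
    nlinarith [sq_nonneg (truncAt L (f ω) + mf)]
  have hIg : Integrable (fun ω => (truncAt L (g ω) - mg) ^ 2) P := by
    have hbound : Integrable (fun ω => 2 * g ω ^ 2 + 2 * mg ^ 2) P :=
      (hg2.const_mul 2).add (integrable_const (2 * mg ^ 2))
    refine hbound.mono
      ((((htrunc_meas.comp_aemeasurable hgm).sub aemeasurable_const).pow_const 2).aestronglyMeasurable) ?_
    filter_upwards with ω
    have hT : truncAt L (g ω) ^ 2 ≤ g ω ^ 2 := by
      rw [htf]; split
      · exact le_rfl
      · nlinarith [sq_nonneg (g ω)]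
    have h0 : (0:ℝ) ≤ 2 * g ω ^ 2 + 2 * mg ^ 2 := by positivity
    rw [Real.norm_eq_abs, abs_of_nonneg (sq_nonneg _), Real.norm_eq_abs, abs_of_nonneg h0]
    nlinarith [sq_nonneg (truncAt L (g ω) + mg)]
  -- sum of squares of components
  have hsumvar : (∫ ω, f ω ^ 2 ∂P) + (∫ ω, g ω ^ 2 ∂P) = 1 := by
    rw [← integral_add hf2 hg2]
    rw [← hvar]
    exact integral_congr_ae (Filter.Eventually.of_forall fun ω => (habs ω).symm)
  have hsum4 : (∫ ω, f ω ^ 4 ∂P) + (∫ ω, g ω ^ 4 ∂P) ≤ M := by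
    rw [← integral_add hf4 hg4, hMdef]
    refine integral_mono (hf4.add hg4) h4 fun ω => ?_
    rw [habs4]
    nlinarith [sq_nonneg (f ω * g ω)]
  -- put it together
  have hmain : ∫ ω, ‖truncXi P L ξ ω‖ ^ 2 ∂P =
      (∫ ω, (truncAt L (f ω) - mf) ^ 2 ∂P) + ∫ ω, (truncAt L (g ω) - mg) ^ 2 ∂P := by
    rw [← integral_add hIf hIg]
    exact integral_congr_ae (Filter.Eventually.of_forall hXi)
  rw [hmain]
  have hf' : ∫ ω, f ω ^ 2 ∂P - 2 * (∫ ω, f ω ^ 4 ∂P) / a ^ 2 ≤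
      ∫ ω, (truncAt L (f ω) - mf) ^ 2 ∂P := by
    convert hcompf using 2 <;> simp [truncAt, hadef, hmf, hfdef]
  have hg' : ∫ ω, g ω ^ 2 ∂P - 2 * (∫ ω, g ω ^ 4 ∂P) / a ^ 2 ≤
      ∫ ω, (truncAt L (g ω) - mg) ^ 2 ∂P := by
    convert hcompg using 2 <;> simp [truncAt, hadef, hmg, hgdef]
  have h4f : 0 ≤ ∫ ω, f ω ^ 4 ∂P := integral_nonneg fun ω => by positivity
  have h4g : 0 ≤ ∫ ω, g ω ^ 4 ∂P := integral_nonneg fun ω => by positivity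
  have hfinal : 2 * (∫ ω, f ω ^ 4 ∂P) / a ^ 2 + 2 * (∫ ω, g ω ^ 4 ∂P) / a ^ 2 ≤ 1 / 2 := by
    have ha2pos : (0:ℝ) < a ^ 2 := by positivity
    rw [← add_div, div_le_iff₀ ha2pos]
    nlinarith
  linarith
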